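/- For all nonnegative integers m and n and any x, the classical Fubini polynomials satisfy F_{n+m}(x) = Σ_{k=0}^m Σ_{l=0}^n k! {m brace k} C(n,l) x^k F_{n−l}^{(k)}(x, k) F_l(x), where F_{j}^{(k)}(x,y) are the two-variable Fubini polynomials of order k. -/

import Mathlib

open PowerSeries

/-- The ordinary falling factorial `(x)_k`. -/
def fallF (x : ℝ) (k : ℕ) : ℝ := ∏ i ∈ Finset.range k, (x - i)

/-- The two-variable Fubini polynomials of order `k ∈ ℕ`, defined by
`(1/(1 − x(e^t − 1)))^k e^{yt} = Σ_j F_j^{(k)}(x,y) t^j/j!`. -/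
noncomputable def fubiniOrd (k : ℕ) (x y : ℝ) (j : ℕ) : ℝ :=
  (Nat.factorial j : ℝ) * PowerSeries.coeff (R := ℝ) j
    (((1 - PowerSeries.C (R := ℝ) x * (PowerSeries.exp ℝ - 1))⁻¹) ^ k *
      PowerSeries.rescale y (PowerSeries.exp ℝ))


/-- Stirling numbers of the second kind. -/
def stirl : ℕ → ℕ → ℕ
  | 0, 0 => 1
  | 0, _ + 1 => 0
  | _ + 1, 0 => 0
  | n + 1, k + 1 => (k + 1) * stirl n (k + 1) + stirl n k

lemma stirl_zero_of_lt : ∀ n k, n < k → stirl n k = 0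
  | 0, _ + 1, _ => rfl
  | n + 1, k + 1, h => by
    have h' : n < k := Nat.lt_of_succ_lt_succ h
    simp [stirl, stirl_zero_of_lt n (k+1) (Nat.lt_succ_of_lt h'), stirl_zero_of_lt n k h']

lemma fallF_succ (x : ℝ) (k : ℕ) : fallF x (k + 1) = fallF x k * (x - k) := by
  simp [fallF, Finset.prod_range_succ]

lemma fallF_nat_self (k : ℕ) : fallF (k : ℝ) k = (k.factorial : ℝ) := by
  have : fallF (k : ℝ) k = ((∏ i ∈ Finset.range k, (k - i) : ℕ) : ℝ) := by
    rw [Nat.cast_prod]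
    refine Finset.prod_congr rfl fun i hi => ?_
    have := Finset.mem_range.mp hi
    rw [Nat.cast_sub this.le]
  rw [this]
  norm_cast
  rw [← Finset.prod_range_reflect]
  rw [← Finset.prod_range_add_one_eq_factorial]
  refine Finset.prod_congr rfl fun i hi => ?_
  have := Finset.mem_range.mp hi
  omega

lemma stirl_fallF (n : ℕ) (x : ℝ) :
    x ^ n = ∑ k ∈ Finset.range (n + 1), (stirl n k : ℝ) * fallF x k := by
  induction n with
  | zero => simp [stirl, fallF]
  | succ n ih =>
    rw [pow_succ, ih, Finset.sum_mul]
    have h1 : ∀ k, (stirl n k : ℝ) * fallF x k * x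
        = (stirl n k : ℝ) * fallF x (k + 1) + (k : ℝ) * (stirl n k : ℝ) * fallF x k := by
      intro k; rw [fallF_succ]; ring
    rw [Finset.sum_congr rfl fun k _ => h1 k, Finset.sum_add_distrib]
    have h2 : ∑ k ∈ Finset.range (n + 1), (k : ℝ) * (stirl n k : ℝ) * fallF x k
        = ∑ k ∈ Finset.range (n + 1), ((k : ℝ) + 1) * (stirl n (k+1) : ℝ) * fallF x (k+1) := by
      have e1 : ∑ k ∈ Finset.range (n + 2), (k : ℝ) * (stirl n k : ℝ) * fallF x k
          = ∑ k ∈ Finset.range (n + 1), (k : ℝ) * (stirl n k : ℝ) * fallF x k := by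
        rw [Finset.sum_range_succ, stirl_zero_of_lt n (n+1) (Nat.lt_succ_self n)]
        simp
      rw [← e1, Finset.sum_range_succ' (fun k => (k : ℝ) * (stirl n k : ℝ) * fallF x k)]
      push_cast
      simp
    rw [h2, ← Finset.sum_add_distrib]
    rw [Finset.sum_range_succ' (fun k => (stirl (n+1) k : ℝ) * fallF x k)]
    have h3 : (stirl (n+1) 0 : ℝ) * fallF x 0 = 0 := by simp [stirl]
    rw [h3, add_zero]
    refine Finset.sum_congr rfl fun k _ => ?_
    show (stirl n k : ℝ) * fallF x (k+1) + ((k:ℝ)+1) * (stirl n (k+1) : ℝ) * fallF x (k+1)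
        = (stirl (n+1) (k+1) : ℝ) * fallF x (k+1)
    simp only [stirl]
    push_cast
    ring

lemma T_unique (T : ℕ → ℕ → ℝ)
    (hT : ∀ (n : ℕ) (x : ℝ), x ^ n = ∑ k ∈ Finset.range (n + 1), T n k * fallF x k)
    (n k : ℕ) (hk : k ≤ n) : T n k = stirl n k := by
  have key : ∀ x : ℝ, ∑ j ∈ Finset.range (n + 1), (T n j - (stirl n j : ℝ)) * fallF x j = 0 := by
    intro x
    simp only [sub_mul, Finset.sum_sub_distrib]
    rw [← hT n x, ← stirl_fallF n x, sub_self]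
  induction k using Nat.strong_induction_on with
  | _ k ih =>
    have hk' := key (k : ℝ)
    have hzero : ∀ j ∈ Finset.range (n + 1), j ≠ k →
        (T n j - (stirl n j : ℝ)) * fallF (k : ℝ) j = 0 := by
      intro j hj hjk
      rcases lt_or_gt_of_ne hjk with h | h
      · rw [ih j h (le_trans (le_of_lt h) hk), sub_self, zero_mul]
      · have : fallF (k : ℝ) j = 0 := by
          apply Finset.prod_eq_zero (Finset.mem_range.mpr h)
          simp
        rw [this, mul_zero]
    rw [Finset.sum_eq_single k hzero
      (by intro h; exact absurd (Finset.mem_range.mpr (Nat.lt_succ_of_le hk)) h)] at hk'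
    have hfk : fallF (k : ℝ) k ≠ 0 := by
      rw [fallF_nat_self]; positivity
    rcases mul_eq_zero.mp hk' with h | h
    · linarith [sub_eq_zero.mp h]
    · exact absurd h hfk

noncomputable def Gs (x : ℝ) : ℝ⟦X⟧ := (1 - PowerSeries.C (R := ℝ) x * (PowerSeries.exp ℝ - 1))⁻¹

lemma constC (x : ℝ) : constantCoeff (R := ℝ) (1 - PowerSeries.C (R := ℝ) x * (exp ℝ - 1)) = 1 := by
  simp [constantCoeff_exp]

lemma hGmul (x : ℝ) : (1 - PowerSeries.C (R := ℝ) x * (exp ℝ - 1)) * Gs x = 1 :=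
  PowerSeries.mul_inv_cancel _ (by rw [constC]; norm_num)

lemma coeff_exp_real (n : ℕ) : coeff (R := ℝ) n (exp ℝ) = 1 / (n.factorial : ℝ) := by
  rw [coeff_exp]
  simp [algebraMap]

lemma deriv_rescale_exp (a : ℝ) :
    d⁄dX ℝ (rescale a (exp ℝ)) = PowerSeries.C (R := ℝ) a * rescale a (exp ℝ) := by
  ext n
  rw [coeff_derivative, coeff_C_mul, coeff_rescale, coeff_rescale,
    coeff_exp_real, coeff_exp_real]
  rw [Nat.factorial_succ]
  have h1 : ((n+1 : ℕ) : ℝ) ≠ 0 := by positivity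
  have h2 : ((n.factorial : ℕ) : ℝ) ≠ 0 := by positivity
  push_cast
  field_simp
  ring

lemma deriv_exp' : d⁄dX ℝ (exp ℝ) = exp ℝ := by
  have := deriv_rescale_exp 1
  simpa using this

lemma egf : ∀ N k, (N.factorial : ℝ) * coeff (R := ℝ) N ((exp ℝ - 1)^k)
    = (k.factorial : ℝ) * (stirl N k) := by
  intro N
  induction N with
  | zero =>
    intro k
    rw [coeff_zero_eq_constantCoeff_apply, map_pow]
    have h0 : constantCoeff (R := ℝ) (exp ℝ - 1) = 0 := by simp [constantCoeff_exp]
    cases k with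
    | zero => simp [stirl]
    | succ k => simp [h0, stirl, zero_pow]
  | succ N ih =>
    intro k
    cases k with
    | zero => simp [stirl, coeff_one]
    | succ k =>
      have hD : d⁄dX ℝ ((exp ℝ - 1)^(k+1))
          = ((k+1 : ℕ) : ℝ⟦X⟧) * ((exp ℝ - 1)^(k+1) + (exp ℝ - 1)^k) := by
        rw [Derivation.leibniz_pow]
        have hde : d⁄dX ℝ (exp ℝ - 1) = exp ℝ := by
          rw [map_sub, deriv_exp', Derivation.map_one_eq_zero, sub_zero]
        rw [hde, Nat.add_sub_cancel, smul_eq_mul, nsmul_eq_mul]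
        congr 1
        rw [pow_succ]; ring
      have hco : coeff (R := ℝ) N (d⁄dX ℝ ((exp ℝ - 1)^(k+1)))
          = coeff (R := ℝ) (N+1) ((exp ℝ - 1)^(k+1)) * (N+1) := coeff_derivative _ _
      rw [hD] at hco
      have hL : coeff (R := ℝ) N (((k+1 : ℕ) : ℝ⟦X⟧) * ((exp ℝ - 1)^(k+1) + (exp ℝ - 1)^k))
          = ((k:ℝ)+1) * (coeff (R := ℝ) N ((exp ℝ - 1)^(k+1)) + coeff (R := ℝ) N ((exp ℝ - 1)^k)) := by
        rw [show ((k+1 : ℕ) : ℝ⟦X⟧) = PowerSeries.C (R := ℝ) (((k+1:ℕ) : ℝ)) by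
          rw [map_natCast]]
        rw [coeff_C_mul, map_add]
        push_cast; ring
      rw [hL] at hco
      have h1 := ih (k+1)
      have h2 := ih k
      have : ((N+1).factorial : ℝ) = (N.factorial : ℝ) * ((N:ℝ)+1) := by
        push_cast [Nat.factorial_succ]; ring
      rw [this]
      have hs : (stirl (N+1) (k+1) : ℝ) = ((k:ℝ)+1) * (stirl N (k+1)) + stirl N k := by
        show ((stirl (N+1) (k+1) : ℕ) : ℝ) = _
        rw [show stirl (N+1) (k+1) = (k+1) * stirl N (k+1) + stirl N k from rfl]
        push_cast; ring
      have hf : (((k+1).factorial : ℕ) : ℝ) = ((k:ℝ)+1) * (k.factorial : ℝ) := by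
        push_cast [Nat.factorial_succ]; ring
      rw [hf, hs]
      have := hco
      nlinarith [hco, h1, h2]

lemma coeffG (x : ℝ) (N : ℕ) : (N.factorial : ℝ) * coeff (R := ℝ) N (Gs x)
    = ∑ k ∈ Finset.range (N + 1), (k.factorial : ℝ) * (stirl N k) * x ^ k := by
  set u : ℝ⟦X⟧ := PowerSeries.C (R := ℝ) x * (exp ℝ - 1) with hu
  have hu0 : constantCoeff (R := ℝ) u = 0 := by simp [hu, constantCoeff_exp]
  set P : ℝ⟦X⟧ := ∑ k ∈ Finset.range (N + 1), u ^ k with hP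
  have hgeom : (1 - u) * P = 1 - u ^ (N + 1) := by
    have := geom_sum_mul u (N + 1)
    have h2 : (1 - u) * P = -(P * (u - 1)) := by ring
    rw [h2, hP, this]; ring
  have hGP : Gs x = P + Gs x * u ^ (N + 1) := by
    have h3 : Gs x * ((1 - u) * P) = Gs x * (1 - u ^ (N + 1)) := by rw [hgeom]
    have h4 : Gs x * (1 - u) = 1 := by
      rw [mul_comm]; exact hGmul x
    calc Gs x = Gs x * (1 - u ^ (N+1)) + Gs x * u ^ (N+1) := by ring
    _ = Gs x * ((1 - u) * P) + Gs x * u ^ (N+1) := by rw [hgeom]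
    _ = (Gs x * (1 - u)) * P + Gs x * u ^ (N+1) := by ring
    _ = P + Gs x * u ^ (N+1) := by rw [h4, one_mul]
  have hvanish : coeff (R := ℝ) N (Gs x * u ^ (N + 1)) = 0 := by
    obtain ⟨w, hw⟩ := PowerSeries.X_dvd_iff.mpr hu0
    rw [hw, mul_pow, show Gs x * (X ^ (N+1) * w ^ (N+1))
      = X ^ (N+1) * (w ^ (N+1) * Gs x) by ring]
    rw [coeff_X_pow_mul']
    simp
  rw [hGP, map_add, hvanish, add_zero, hP, map_sum, Finset.mul_sum]
  refine Finset.sum_congr rfl fun k _ => ?_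
  rw [hu, mul_pow, ← map_pow, coeff_C_mul, ← egf N k]
  ring

lemma deriv_one_sub_u (x : ℝ) : d⁄dX ℝ (1 - PowerSeries.C (R := ℝ) x * (exp ℝ - 1))
    = -(PowerSeries.C (R := ℝ) x * exp ℝ) := by
  rw [map_sub, Derivation.map_one_eq_zero, zero_sub, neg_inj]
  rw [Derivation.leibniz, derivative_C, smul_zero, add_zero, smul_eq_mul,
    map_sub, deriv_exp', Derivation.map_one_eq_zero, sub_zero]

lemma deriv_G (x : ℝ) : d⁄dX ℝ (Gs x) = PowerSeries.C (R := ℝ) x * exp ℝ * (Gs x) ^ 2 := by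
  have h := Derivation.leibniz_of_mul_eq_one (D := d⁄dX ℝ)
    (a := Gs x) (b := 1 - PowerSeries.C (R := ℝ) x * (exp ℝ - 1))
    (by rw [mul_comm]; exact hGmul x)
  rw [h, deriv_one_sub_u, smul_eq_mul]
  ring

lemma rescale_add_one_exp (k : ℕ) :
    exp ℝ * rescale (k:ℝ) (exp ℝ) = rescale ((k:ℝ)+1) (exp ℝ) := by
  have h1 : rescale (1:ℝ) (exp ℝ) = exp ℝ := by rw [rescale_one]; rfl
  nth_rewrite 1 [← h1]
  rw [exp_mul_exp_eq_exp_add, add_comm]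

lemma deriv_term (x c : ℝ) (k : ℕ) :
    d⁄dX ℝ (PowerSeries.C (R := ℝ) c * ((Gs x)^(k+1) * rescale (k:ℝ) (exp ℝ)))
    = PowerSeries.C (R := ℝ) (c * k) * ((Gs x)^(k+1) * rescale (k:ℝ) (exp ℝ))
      + PowerSeries.C (R := ℝ) (c * ((k:ℝ)+1) * x) * ((Gs x)^(k+2) * rescale ((k:ℝ)+1) (exp ℝ)) := by
  rw [Derivation.leibniz, derivative_C, smul_zero, add_zero, smul_eq_mul]
  rw [Derivation.leibniz, smul_eq_mul, smul_eq_mul, deriv_rescale_exp,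
    Derivation.leibniz_pow, deriv_G, smul_eq_mul, nsmul_eq_mul, Nat.add_sub_cancel]
  rw [← rescale_add_one_exp]
  have hc : ((k+1 : ℕ) : ℝ⟦X⟧) = PowerSeries.C (R := ℝ) ((k:ℝ)+1) := by
    rw [← map_natCast (PowerSeries.C (R := ℝ)) (k+1)]; push_cast; ring_nf
  rw [hc]
  simp only [map_mul, map_add, map_natCast]
  push_cast
  ring

lemma mainId (x : ℝ) (m : ℕ) : (d⁄dX ℝ)^[m] (Gs x)
    = ∑ k ∈ Finset.range (m+1), PowerSeries.C (R := ℝ) ((k.factorial : ℝ) * stirl m k * x^k)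
        * ((Gs x)^(k+1) * rescale (k:ℝ) (exp ℝ)) := by
  induction m with
  | zero =>
    rw [Function.iterate_zero, id_eq, show (0:ℕ)+1 = 1 from rfl, Finset.sum_range_one]
    rw [show stirl 0 0 = 1 from rfl]
    have h5 : rescale ((0:ℕ):ℝ) (exp ℝ) = 1 := by
      rw [Nat.cast_zero, rescale_zero]
      show PowerSeries.C (R := ℝ) (constantCoeff (R := ℝ) (exp ℝ)) = 1
      rw [constantCoeff_exp, map_one]
    rw [h5]
    norm_num
  | succ m ih =>
    rw [Function.iterate_succ_apply', ih, map_sum]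
    have hterm : ∀ k ∈ Finset.range (m+1),
        d⁄dX ℝ (PowerSeries.C (R := ℝ) ((k.factorial : ℝ) * stirl m k * x^k)
          * ((Gs x)^(k+1) * rescale (k:ℝ) (exp ℝ)))
        = PowerSeries.C (R := ℝ) ((k.factorial : ℝ) * stirl m k * x^k * k)
            * ((Gs x)^(k+1) * rescale (k:ℝ) (exp ℝ))
          + PowerSeries.C (R := ℝ) ((k.factorial : ℝ) * stirl m k * x^k * ((k:ℝ)+1) * x)
            * ((Gs x)^(k+2) * rescale ((k:ℝ)+1) (exp ℝ)) := by
      intro k _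
      rw [deriv_term x _ k]
    rw [Finset.sum_congr rfl hterm, Finset.sum_add_distrib]
    -- name the two sums
    set A := ∑ k ∈ Finset.range (m+1),
      PowerSeries.C (R := ℝ) ((k.factorial : ℝ) * stirl m k * x^k * k)
        * ((Gs x)^(k+1) * rescale (k:ℝ) (exp ℝ)) with hA
    set B := ∑ k ∈ Finset.range (m+1),
      PowerSeries.C (R := ℝ) ((k.factorial : ℝ) * stirl m k * x^k * ((k:ℝ)+1) * x)
        * ((Gs x)^(k+2) * rescale ((k:ℝ)+1) (exp ℝ)) with hB
    -- rewrite target via sum_range_succ'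
    rw [Finset.sum_range_succ' (fun k => PowerSeries.C (R := ℝ) ((k.factorial : ℝ) * stirl (m+1) k * x^k)
        * ((Gs x)^(k+1) * rescale (k:ℝ) (exp ℝ)))]
    have h0 : PowerSeries.C (R := ℝ) (((0:ℕ).factorial : ℝ) * stirl (m+1) 0 * x^0)
        * ((Gs x)^(0+1) * rescale ((0:ℕ):ℝ) (exp ℝ)) = 0 := by
      rw [show stirl (m+1) 0 = 0 from rfl]
      norm_num
    rw [h0, add_zero]
    -- rewrite A via sum_range_succ'
    have hA2 : A = ∑ k ∈ Finset.range (m+1),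
        PowerSeries.C (R := ℝ) (((k+1).factorial : ℝ) * (((k:ℝ)+1) * stirl m (k+1)) * x^(k+1))
          * ((Gs x)^(k+2) * rescale (((k:ℕ):ℝ)+1) (exp ℝ)) := by
      rw [hA]
      have e1 : ∑ k ∈ Finset.range (m+2),
          PowerSeries.C (R := ℝ) ((k.factorial : ℝ) * stirl m k * x^k * k)
            * ((Gs x)^(k+1) * rescale (k:ℝ) (exp ℝ))
          = ∑ k ∈ Finset.range (m+1),
          PowerSeries.C (R := ℝ) ((k.factorial : ℝ) * stirl m k * x^k * k)
            * ((Gs x)^(k+1) * rescale (k:ℝ) (exp ℝ)) := by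
        rw [Finset.sum_range_succ, stirl_zero_of_lt m (m+1) (Nat.lt_succ_self m)]
        norm_num
      rw [← e1, Finset.sum_range_succ' (fun k => PowerSeries.C (R := ℝ) ((k.factorial : ℝ) * stirl m k * x^k * k)
        * ((Gs x)^(k+1) * rescale (k:ℝ) (exp ℝ)))]
      norm_num
      refine Finset.sum_congr rfl fun k _ => ?_
      push_cast [Nat.factorial_succ]
      ring_nf
    rw [hA2, hB, ← Finset.sum_add_distrib]
    refine Finset.sum_congr rfl fun k _ => ?_
    rw [← add_mul, ← map_add]
    congr 2
    · rw [show stirl (m+1) (k+1) = (k+1) * stirl m (k+1) + stirl m k from rfl]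
      push_cast [Nat.factorial_succ]
      ring
    · push_cast
      ring_nf

lemma coeff_iter (m : ℕ) : ∀ (f : ℝ⟦X⟧) (n : ℕ),
    (n.factorial : ℝ) * coeff (R := ℝ) n ((d⁄dX ℝ)^[m] f)
    = ((n+m).factorial : ℝ) * coeff (R := ℝ) (n+m) f := by
  induction m with
  | zero => simp
  | succ m ih =>
    intro f n
    rw [Function.iterate_succ_apply, ih (d⁄dX ℝ f) n, coeff_derivative]
    rw [show n + (m+1) = (n+m) + 1 from rfl, Nat.factorial_succ]
    push_cast
    ring

lemma fubiniOrd_eq (k : ℕ) (x y : ℝ) (j : ℕ) :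
    fubiniOrd k x y j = (j.factorial : ℝ) * coeff (R := ℝ) j ((Gs x) ^ k * rescale y (exp ℝ)) := rfl

theorem stmt12 (T : ℕ → ℕ → ℝ)
    (hT : ∀ (n : ℕ) (x : ℝ), x ^ n = ∑ k ∈ Finset.range (n + 1), T n k * fallF x k)
    (n m : ℕ) (x : ℝ) :
    (∑ j ∈ Finset.range (n + m + 1), (Nat.factorial j : ℝ) * T (n + m) j * x ^ j) =
      ∑ k ∈ Finset.range (m + 1), ∑ l ∈ Finset.range (n + 1),
        (Nat.factorial k : ℝ) * T m k * (n.choose l : ℝ) * x ^ k *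
          fubiniOrd k x (k : ℝ) (n - l) *
          (∑ j ∈ Finset.range (l + 1), (Nat.factorial j : ℝ) * T l j * x ^ j) := by
  have hTs : ∀ N k, k ≤ N → T N k = stirl N k := T_unique T hT
  -- replace T by stirl everywhere
  have hLHS : (∑ j ∈ Finset.range (n + m + 1), (Nat.factorial j : ℝ) * T (n + m) j * x ^ j)
      = ∑ j ∈ Finset.range (n + m + 1), (Nat.factorial j : ℝ) * (stirl (n + m) j) * x ^ j := by
    refine Finset.sum_congr rfl fun j hj => ?_
    rw [hTs (n+m) j (Nat.lt_succ_iff.mp (Finset.mem_range.mp hj))]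
  have hFub : ∀ l, (∑ j ∈ Finset.range (l + 1), (Nat.factorial j : ℝ) * T l j * x ^ j)
      = (l.factorial : ℝ) * coeff (R := ℝ) l (Gs x) := by
    intro l
    rw [coeffG]
    refine Finset.sum_congr rfl fun j hj => ?_
    rw [hTs l j (Nat.lt_succ_iff.mp (Finset.mem_range.mp hj))]
  rw [hLHS, ← coeffG x (n + m)]
  have h1 : ((n + m).factorial : ℝ) * coeff (R := ℝ) (n + m) (Gs x)
      = (n.factorial : ℝ) * coeff (R := ℝ) n ((d⁄dX ℝ)^[m] (Gs x)) := (coeff_iter m (Gs x) n).symm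
  rw [h1, mainId x m, map_sum, Finset.mul_sum]
  refine Finset.sum_congr rfl fun k hk => ?_
  have hkm : k ≤ m := Nat.lt_succ_iff.mp (Finset.mem_range.mp hk)
  rw [coeff_C_mul]
  have hsplit : (Gs x) ^ (k+1) * rescale (k:ℝ) (exp ℝ)
      = Gs x * ((Gs x) ^ k * rescale (k:ℝ) (exp ℝ)) := by
    rw [pow_succ']; ring
  rw [hsplit, coeff_mul, Finset.Nat.sum_antidiagonal_eq_sum_range_succ_mk,
    Finset.mul_sum, Finset.mul_sum]
  refine Finset.sum_congr rfl fun l hl => ?_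
  have hln : l ≤ n := Nat.lt_succ_iff.mp (Finset.mem_range.mp hl)
  rw [hTs m k hkm, hFub l, fubiniOrd_eq]
  have hn : (n.factorial : ℝ)
      = (n.choose l : ℝ) * (l.factorial : ℝ) * ((n-l).factorial : ℝ) := by
    rw [← Nat.choose_mul_factorial_mul_factorial hln]
    push_cast; ring
  rw [hn]
  ring
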